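/- (Proposition 5) Let L be a finite-dimensional left Leibniz algebra over a field k of characteristic 0 with dim L ≥ 1. Then for every x ∈ L the left multiplication operator l_x and the right multiplication operator r_x are degenerate linear operators: det(l_x) = 0 and det(r_x) = 0. -/

import Mathlib

/-
Basic notions for (left) Leibniz algebras, given by a bilinear bracket
`β : M →ₗ[k] M →ₗ[k] M` on a `k`-vector space `M`.
-/

section LeibnizDefs

variable {k : Type*} [Field k] {M : Type*} [AddCommGroup M] [Module k M]

/-- `[A, B]`: the linear span of brackets of elements of two subspaces. -/
def bracketSpan (β : M →ₗ[k] M →ₗ[k] M) (A B : Submodule k M) : Submodule k M :=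
  Submodule.span k {z : M | ∃ a ∈ A, ∃ b ∈ B, z = β a b}

/-- Derived series of a subspace `I`: `D^0 = I`, `D^{n+1} = [D^n, D^n]`. -/
def derivedSeriesOf (β : M →ₗ[k] M →ₗ[k] M) (I : Submodule k M) : ℕ → Submodule k M
  | 0 => I
  | n + 1 => bracketSpan β (derivedSeriesOf β I n) (derivedSeriesOf β I n)

/-- Lower central series of a subspace `I`: `C^0 = I`, `C^{n+1} = [I, C^n]`. -/
def lowerCentralSeriesOf (β : M →ₗ[k] M →ₗ[k] M) (I : Submodule k M) : ℕ → Submodule k M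
  | 0 => I
  | n + 1 => bracketSpan β I (lowerCentralSeriesOf β I n)

/-- A two-sided ideal. -/
def LeibnizIdeal (β : M →ₗ[k] M →ₗ[k] M) (I : Submodule k M) : Prop :=
  (∀ x : M, ∀ u ∈ I, β x u ∈ I) ∧ (∀ u ∈ I, ∀ x : M, β u x ∈ I)

/-- A subspace is solvable if its derived series reaches `0`. -/
def LeibnizSolvable (β : M →ₗ[k] M →ₗ[k] M) (I : Submodule k M) : Prop :=
  ∃ n, derivedSeriesOf β I n = ⊥

/-- A subspace is nilpotent if its lower central series reaches `0`. -/
def LeibnizNilpotent (β : M →ₗ[k] M →ₗ[k] M) (I : Submodule k M) : Prop :=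
  ∃ n, lowerCentralSeriesOf β I n = ⊥

/-- A subalgebra: a subspace closed under the bracket. -/
def LeibnizSubalgebra (β : M →ₗ[k] M →ₗ[k] M) (S : Submodule k M) : Prop :=
  ∀ u ∈ S, ∀ v ∈ S, β u v ∈ S

end LeibnizDefs

lemma det_eq_zero_of_ker {k L : Type*} [Field k] [AddCommGroup L] [Module k L]
    [FiniteDimensional k L] (f : L →ₗ[k] L) {v : L} (hv : v ≠ 0) (hfv : f v = 0) :
    LinearMap.det f = 0 := by
  classical
  let b := Module.finBasis k L
  rw [← LinearMap.det_toMatrix b, ← Matrix.exists_mulVec_eq_zero_iff]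
  refine ⟨b.repr v, ?_, ?_⟩
  · intro h
    apply hv
    have : b.repr v = 0 := by ext i; exact congrFun h i
    simpa using congrArg b.repr.symm this
  · funext i
    rw [LinearMap.toMatrix_mulVec_repr]
    simp [hfv]


/-- In a nonzero finite-dimensional Leibniz algebra, all left and right multiplication
operators are degenerate. -/
theorem stmt_16 {k : Type*} [Field k] [CharZero k] {L : Type*} [AddCommGroup L] [Module k L]
    [FiniteDimensional k L] (β : L →ₗ[k] L →ₗ[k] L)
    (leib : ∀ x y z : L, β x (β y z) = β (β x y) z + β y (β x z))
    (hdim : 1 ≤ Module.finrank k L) :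
    ∀ x : L, LinearMap.det (β x) = 0 ∧ LinearMap.det (β.flip x) = 0 := by
  intro x
  set I : Submodule k L := Submodule.span k {z : L | ∃ y, z = β y y} with hIdef
  have sq_mem : ∀ y : L, β y y ∈ I := fun y => Submodule.subset_span ⟨y, rfl⟩
  have factA : ∀ y z : L, β (β y y) z = 0 := fun y z => right_eq_add.mp (leib y y z)
  have hβI : ∀ u ∈ I, β u = 0 := by
    intro u hu
    have hle : I ≤ LinearMap.ker β := by
      rw [Submodule.span_le]
      rintro z ⟨y, rfl⟩
      rw [SetLike.mem_coe, LinearMap.mem_ker]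
      ext w
      exact factA y w
    exact LinearMap.mem_ker.mp (hle hu)
  have sym_mem : ∀ a b : L, β a b + β b a ∈ I := by
    intro a b
    have h : β a b + β b a = β (a + b) (a + b) - β a a - β b b := by
      simp [map_add, LinearMap.add_apply]; abel
    rw [h]
    exact sub_mem (sub_mem (sq_mem _) (sq_mem a)) (sq_mem b)
  have mapI : ∀ u ∈ I, β x u ∈ I := by
    intro u hu
    induction hu using Submodule.span_induction with
    | mem z hz =>
      obtain ⟨y, rfl⟩ := hz
      rw [leib x y y]
      exact sym_mem (β x y) y
    | zero => simp
    | add a b _ _ ha hb => rw [map_add]; exact I.add_mem ha hb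
    | smul c a _ ha => rw [map_smul]; exact I.smul_mem c ha
  have det0 : LinearMap.det (0 : L →ₗ[k] L) = 0 := by
    rw [LinearMap.det_zero]
    exact zero_pow (by omega)
  constructor
  · -- left multiplication
    by_cases hx : x ∈ I
    · rw [hβI x hx]; exact det0
    · by_contra hdet
      have hinj : Function.Injective (β x) := by
        rw [← LinearMap.ker_eq_bot]
        by_contra hker
        obtain ⟨v, hvmem, hv⟩ := Submodule.exists_mem_ne_zero_of_ne_bot hker
        exact hdet (det_eq_zero_of_ker (β x) hv hvmem)
      set J : Submodule k L := I ⊔ Submodule.span k {x} with hJdef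
      have hmaple : J.map (β x) ≤ I := by
        rw [Submodule.map_le_iff_le_comap]
        refine sup_le (fun u hu => mapI u hu) ?_
        rw [Submodule.span_le]
        rintro z hz
        rw [Set.mem_singleton_iff] at hz
        rw [hz]
        exact sq_mem x
      have hIJ : I < J := lt_of_le_of_ne le_sup_left (by
        intro h
        apply hx
        rw [h]
        exact Submodule.mem_sup_right (Submodule.mem_span_singleton_self x))
      have h1 : Module.finrank k I < Module.finrank k J :=
        Submodule.finrank_lt_finrank_of_lt hIJ
      have h2 : Module.finrank k J = Module.finrank k (J.map (β x)) :=
        (Submodule.equivMapOfInjective (β x) hinj J).finrank_eq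
      have h3 : Module.finrank k (J.map (β x)) ≤ Module.finrank k I :=
        Submodule.finrank_mono hmaple
      omega
  · -- right multiplication
    by_cases hI : I = ⊥
    · have hsq : ∀ y : L, β y y = 0 := by
        intro y
        have := sq_mem y
        rwa [hI, Submodule.mem_bot] at this
      by_cases hx : x = 0
      · subst hx
        have : β.flip (0 : L) = 0 := by ext y; simp
        rw [this]; exact det0
      · refine det_eq_zero_of_ker _ hx ?_
        simpa using hsq x
    · obtain ⟨u, humem, hu⟩ := Submodule.exists_mem_ne_zero_of_ne_bot hI
      refine det_eq_zero_of_ker _ hu ?_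
      have := hβI u humem
      simp only [LinearMap.flip_apply]
      rw [this]
      rfl
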